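/- Let φ : k → SL(4,k) be a map such that φ(t+t') = φ(t)·φ(t') for all t,t' ∈ k, every matrix entry of φ(t) is a polynomial function of t, and φ(t) is upper triangular with all diagonal entries equal to 1 for every t ∈ k; assume moreover that none of the three superdiagonal entry polynomials t ↦ φ(t)₁₂, t ↦ φ(t)₂₃, t ↦ φ(t)₃₄ is identically zero. Let d₁ ≥ d₂ ≥ 0 be integers, set ω(u) = diag(u^{d₁}, u^{d₂}, u^{−d₂}, u^{−d₁}) for u ∈ kˣ, and assume ω(u)·φ(t)·ω(u)⁻¹ = φ(u²·t) for all t ∈ k and u ∈ kˣ. Then p ≥ 5, and there exist an integer e ≥ 0 and P ∈ GL(4,k) such that d₁ = 3·p^e, d₂ = p^e, P commutes with ω(u) for every u ∈ kˣ, and, writing q = p^e, P⁻¹·φ(t)·P = [[1, t^q, (1/2)t^{2q}, (1/6)t^{3q}], [0, 1, t^q, (1/2)t^{2q}], [0, 0, 1, t^q], [0, 0, 0, 1]] for every t ∈ k. -/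

import Mathlib

open Matrix Polynomial

section helpers

variable {k : Type*} [Field k] [IsAlgClosed k] {p : ℕ} [Fact p.Prime] [CharP k p]

omit [Fact p.Prime] [CharP k p] in
lemma units_zpow_eq_one {m : ℤ} (h : ∀ u : kˣ, (u : k) ^ m = 1) : m = 0 := by
  by_contra hm
  set N := m.natAbs with hN
  have hN1 : 0 < N := Int.natAbs_pos.mpr hm
  have hNpow : ∀ u : kˣ, (u : k) ^ N = 1 := by
    intro u
    rcases Int.natAbs_eq m with h' | h'
    · have := h u
      rwa [h', zpow_natCast] at this
    · have := h u
      rw [h', _root_.zpow_neg, zpow_natCast, inv_eq_one] at this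
      exact this
  classical
  obtain ⟨c, hc⟩ := Infinite.exists_notMem_finset ({0, 1} : Finset k)
  simp only [Finset.mem_insert, Finset.mem_singleton, not_or] at hc
  obtain ⟨z, hz⟩ := IsAlgClosed.exists_pow_nat_eq c hN1
  have hz0 : z ≠ 0 := by
    rintro rfl
    exact hc.1 (by rw [← hz, zero_pow hN1.ne'])
  have := hNpow (Units.mk0 z hz0)
  rw [Units.val_mk0, hz] at this
  exact hc.2 this

lemma coeff_comp_C_mul_X {R : Type*} [CommSemiring R] (P : R[X]) (a : R) (i : ℕ) :
    (P.comp (C a * X)).coeff i = P.coeff i * a ^ i := by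
  induction P using Polynomial.induction_on' with
  | add p q hp hq => simp [add_comp, coeff_add, hp, hq, add_mul]
  | monomial n c =>
    simp only [monomial_comp, coeff_monomial, mul_pow, ← C_pow, ← mul_assoc, ← C_mul,
      coeff_C_mul, coeff_X_pow]
    split_ifs <;> simp_all

omit [Fact p.Prime] [CharP k p] in
lemma homog_monomial (g : k → k) (n : ℤ) (hpoly : ∃ P : k[X], ∀ t, g t = P.eval t)
    (hh : ∀ (u : kˣ) (t : k), g ((u : k) ^ 2 * t) = (u : k) ^ n * g t)
    (hg : ¬∀ t, g t = 0) :
    ∃ (m : ℕ) (c : k), c ≠ 0 ∧ (∀ t, g t = c * t ^ m) ∧ n = 2 * m := by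
  obtain ⟨P, hP⟩ := hpoly
  have key : ∀ (u : kˣ) (i : ℕ), P.coeff i * ((u : k) ^ 2) ^ i = (u : k) ^ n * P.coeff i := by
    intro u i
    have heq : P.comp (C ((u : k) ^ 2) * X) = C ((u : k) ^ n) * P := by
      apply Polynomial.funext
      intro t
      rw [eval_comp, eval_mul, eval_C, eval_mul, eval_C, eval_X, ← hP, ← hP, hh]
    have h0 := congrArg (fun Q => Q.coeff i) heq
    rwa [coeff_comp_C_mul_X, coeff_C_mul] at h0
  have hcoe : ∀ i : ℕ, P.coeff i ≠ 0 → (n : ℤ) = 2 * i := by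
    intro i hi
    have h1 : ∀ u : kˣ, (u : k) ^ ((2 * i : ℤ) - n) = 1 := by
      intro u
      have h2 := key u i
      have h3 : ((u : k) ^ 2) ^ i = (u : k) ^ n :=
        mul_left_cancel₀ hi (by linear_combination h2)
      have hu : (u : k) ≠ 0 := u.ne_zero
      rw [← pow_mul] at h3
      rw [zpow_sub₀ hu, ← zpow_natCast (u : k) (2 * i)] at *
      push_cast at h3 ⊢
      rw [h3, div_self (zpow_ne_zero _ hu)]
    have := units_zpow_eq_one h1
    omega
  have hPne : P ≠ 0 := by
    intro h
    exact hg fun t => by rw [hP, h, eval_zero]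
  obtain ⟨m, hm⟩ : ∃ m, P.coeff m ≠ 0 := by
    by_contra h
    push_neg at h
    exact hPne (Polynomial.ext fun i => by simpa using h i)
  have hnm := hcoe m hm
  have hPm : P = C (P.coeff m) * X ^ m := by
    ext i
    rw [coeff_C_mul, coeff_X_pow]
    by_cases h : i = m
    · subst h; simp
    · rw [if_neg h, mul_zero]
      by_contra hi
      have := hcoe i hi
      omega
  refine ⟨m, P.coeff m, hm, fun t => ?_, by omega⟩
  rw [hP, hPm]
  simp

omit [IsAlgClosed k] in
lemma pow_add_one_ppow : ∀ m : ℕ, ((X : k[X]) + 1) ^ m = X ^ m + 1 → ∃ e, m = p ^ e := by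
  intro m
  induction m using Nat.strong_induction_on with
  | _ m ih =>
    intro hm
    match m, hm with
    | 0, hm =>
      exfalso
      have := congrArg (eval 0) hm
      simp at this
    | 1, _ => exact ⟨0, by simp⟩
    | (m + 2), hm =>
      have hd := congrArg derivative hm
      simp only [derivative_add, derivative_pow, derivative_one, derivative_X, add_zero,
        mul_one, Nat.add_sub_cancel] at hd
      have hpm : p ∣ (m + 2) := by
        by_contra hnd
        have hne : (C ((m + 2 : ℕ) : k)) ≠ 0 := by
          simp only [ne_eq, C_eq_zero]
          exact fun h => hnd ((CharP.cast_eq_zero_iff k p (m + 2)).mp h)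
        have h2 : ((X : k[X]) + 1) ^ (m + 1) = X ^ (m + 1) :=
          mul_left_cancel₀ hne hd
        have := congrArg (eval 0) h2
        simp [zero_pow (Nat.succ_ne_zero m)] at this
      obtain ⟨m', hm'⟩ := hpm
      have hp2 : 2 ≤ p := (Fact.out : p.Prime).two_le
      have hm'pos : 0 < m' := by
        rcases Nat.eq_zero_or_pos m' with h | h
        · subst h; simp at hm'
        · exact h
      have hfr : ((X : k[X]) + 1) ^ m' = X ^ m' + 1 := by
        have h3 : (((X : k[X]) + 1) ^ m') ^ p = ((X ^ m' + 1) : k[X]) ^ p := by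
          rw [add_pow_char (p := p), one_pow, ← pow_mul, ← pow_mul, mul_comm m' p, ← hm', hm]
        exact frobenius_inj k[X] p h3
      have hlt : m' < m + 2 := by
        have h4 : 2 * m' ≤ p * m' := Nat.mul_le_mul_right m' hp2
        omega
      obtain ⟨e, he⟩ := ih m' hlt hfr
      exact ⟨e + 1, by rw [hm', he, pow_succ, mul_comm]⟩

lemma additive_homog (g : k → k) (hpoly : ∃ P : k[X], ∀ t, g t = P.eval t)
    (hadd : ∀ t t', g (t + t') = g t + g t') (n : ℤ)
    (hh : ∀ (u : kˣ) (t : k), g ((u : k) ^ 2 * t) = (u : k) ^ n * g t)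
    (hg : ¬∀ t, g t = 0) :
    ∃ (e : ℕ) (c : k), c ≠ 0 ∧ (∀ t, g t = c * t ^ p ^ e) ∧ n = 2 * p ^ e := by
  obtain ⟨m, c, hc, hgm, hnm⟩ := homog_monomial g n hpoly hh hg
  have hg0 : g 0 = 0 := by
    have := hadd 0 0
    rw [add_zero] at this
    exact (left_eq_add.mp this)
  have hm0 : m ≠ 0 := by
    rintro rfl
    apply hc
    have := hgm 0
    rw [pow_zero, mul_one] at this
    rw [← this, hg0]
  have hbin : ((X : k[X]) + 1) ^ m = X ^ m + 1 := by
    apply Polynomial.funext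
    intro t
    have h1 := hadd t 1
    rw [hgm, hgm, hgm, one_pow, mul_one] at h1
    have h2 : (t + 1) ^ m = t ^ m + 1 := by
      apply mul_left_cancel₀ hc
      rw [h1]; ring
    simpa using h2
  obtain ⟨e, he⟩ := pow_add_one_ppow (p := p) m hbin
  exact ⟨e, c, hc, fun t => by rw [hgm t, he], by rw [hnm, he]; push_cast; ring⟩

end helpers

/-- The antisymmetric diagonal cocharacter `ω(u) = diag(u^{d₁}, u^{d₂}, u^{−d₂}, u^{−d₁})`. -/
noncomputable def omegaD (k : Type*) [Field k] (d₁ d₂ : ℤ) (u : kˣ) :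
    Matrix (Fin 4) (Fin 4) k :=
  Matrix.diagonal ![(u : k) ^ d₁, (u : k) ^ d₂, (u : k) ^ (-d₂), (u : k) ^ (-d₁)]

set_option maxHeartbeats 2000000 in
/-- A unipotent upper-triangular one-parameter subgroup `φ` of `SL(4,k)`
with all three superdiagonal entries nontrivial, normalized by the antisymmetric torus
`ω(u) = diag(u^{d₁}, u^{d₂}, u^{−d₂}, u^{−d₁})` (with `d₁ ≥ d₂ ≥ 0`), forces `p ≥ 5`,
`d₁ = 3p^e`, `d₂ = p^e`, and `φ` is conjugate (by a matrix commuting with all `ω(u)`)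
to the regular unipotent form (I). -/
theorem stmt4 {k : Type*} [Field k] [IsAlgClosed k] {p : ℕ} [Fact p.Prime] [CharP k p]
    (φ : k → SpecialLinearGroup (Fin 4) k)
    (hadd : ∀ t t' : k, φ (t + t') = φ t * φ t')
    (hpoly : ∀ i j : Fin 4, ∃ P : Polynomial k, ∀ t : k, (φ t).1 i j = P.eval t)
    (htri : ∀ (t : k) (i j : Fin 4), j < i → (φ t).1 i j = 0)
    (hdiag : ∀ (t : k) (i : Fin 4), (φ t).1 i i = 1)
    (hsup₁ : ¬∀ t : k, (φ t).1 0 1 = 0)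
    (hsup₂ : ¬∀ t : k, (φ t).1 1 2 = 0)
    (hsup₃ : ¬∀ t : k, (φ t).1 2 3 = 0)
    (d₁ d₂ : ℤ) (hd₁₂ : d₂ ≤ d₁) (hd₂ : 0 ≤ d₂)
    (hconj : ∀ (t : k) (u : kˣ),
      omegaD k d₁ d₂ u * (φ t).1 * (omegaD k d₁ d₂ u)⁻¹ = (φ ((u : k) ^ 2 * t)).1) :
    5 ≤ p ∧
      ∃ (e : ℕ) (P : GL (Fin 4) k),
        d₁ = 3 * (p : ℤ) ^ e ∧
        d₂ = (p : ℤ) ^ e ∧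
        (∀ u : kˣ, (P : Matrix (Fin 4) (Fin 4) k) * omegaD k d₁ d₂ u =
          omegaD k d₁ d₂ u * (P : Matrix (Fin 4) (Fin 4) k)) ∧
        ∀ t : k,
          ((P⁻¹ : GL (Fin 4) k) : Matrix (Fin 4) (Fin 4) k) * (φ t).1 *
              (P : Matrix (Fin 4) (Fin 4) k) =
            !![1, t ^ p ^ e, (1 / 2 : k) * t ^ (2 * p ^ e), (1 / 6 : k) * t ^ (3 * p ^ e);
               0, 1, t ^ p ^ e, (1 / 2 : k) * t ^ (2 * p ^ e);
               0, 0, 1, t ^ p ^ e;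
               0, 0, 0, 1] := by
  classical
  have hprime : p.Prime := Fact.out
  have z10 : ∀ s : k, (φ s).1 1 0 = 0 := fun s => htri s 1 0 (by decide)
  have z20 : ∀ s : k, (φ s).1 2 0 = 0 := fun s => htri s 2 0 (by decide)
  have z21 : ∀ s : k, (φ s).1 2 1 = 0 := fun s => htri s 2 1 (by decide)
  have z30 : ∀ s : k, (φ s).1 3 0 = 0 := fun s => htri s 3 0 (by decide)
  have z31 : ∀ s : k, (φ s).1 3 1 = 0 := fun s => htri s 3 1 (by decide)
  have z32 : ∀ s : k, (φ s).1 3 2 = 0 := fun s => htri s 3 2 (by decide)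
  have hφ0 : φ 0 = 1 := by
    have h := hadd 0 0
    rw [add_zero] at h
    have h2 : φ 0 * 1 = φ 0 * φ 0 := by rw [mul_one]; exact h
    exact (mul_left_cancel h2).symm
  have hone02 : ((1 : SpecialLinearGroup (Fin 4) k) : Matrix (Fin 4) (Fin 4) k) 0 2 = 0 := by
    simp [Matrix.one_apply]
  have hone03 : ((1 : SpecialLinearGroup (Fin 4) k) : Matrix (Fin 4) (Fin 4) k) 0 3 = 0 := by
    simp [Matrix.one_apply]
  have hmul : ∀ t t' : k, (φ (t + t')).1 = (φ t).1 * (φ t').1 := by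
    intro t t'; rw [hadd]; rfl
  have cA : ∀ t t' : k, (φ (t + t')).1 0 1 = (φ t).1 0 1 + (φ t').1 0 1 := by
    intro t t'
    have h := congrFun (congrFun (hmul t t') 0) 1
    simp [Matrix.mul_apply, Fin.sum_univ_four, hdiag, z21, z31] at h
    linear_combination h
  have cD : ∀ t t' : k, (φ (t + t')).1 1 2 = (φ t).1 1 2 + (φ t').1 1 2 := by
    intro t t'
    have h := congrFun (congrFun (hmul t t') 1) 2
    simp [Matrix.mul_apply, Fin.sum_univ_four, hdiag, z10, z32] at h
    linear_combination h
  have cF : ∀ t t' : k, (φ (t + t')).1 2 3 = (φ t).1 2 3 + (φ t').1 2 3 := by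
    intro t t'
    have h := congrFun (congrFun (hmul t t') 2) 3
    simp [Matrix.mul_apply, Fin.sum_univ_four, hdiag, z20, z21] at h
    linear_combination h
  have cB : ∀ t t' : k, (φ (t + t')).1 0 2
      = (φ t).1 0 2 + (φ t).1 0 1 * (φ t').1 1 2 + (φ t').1 0 2 := by
    intro t t'
    have h := congrFun (congrFun (hmul t t') 0) 2
    simp [Matrix.mul_apply, Fin.sum_univ_four, hdiag, z32] at h
    linear_combination h
  have cE : ∀ t t' : k, (φ (t + t')).1 1 3
      = (φ t).1 1 3 + (φ t).1 1 2 * (φ t').1 2 3 + (φ t').1 1 3 := by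
    intro t t'
    have h := congrFun (congrFun (hmul t t') 1) 3
    simp [Matrix.mul_apply, Fin.sum_univ_four, hdiag, z10] at h
    linear_combination h
  have cC : ∀ t t' : k, (φ (t + t')).1 0 3
      = (φ t).1 0 3 + (φ t).1 0 1 * (φ t').1 1 3 + (φ t).1 0 2 * (φ t').1 2 3
        + (φ t').1 0 3 := by
    intro t t'
    have h := congrFun (congrFun (hmul t t') 0) 3
    simp [Matrix.mul_apply, Fin.sum_univ_four, hdiag] at h
    linear_combination h
  -- scaling structure
  have hne : ∀ u : kˣ, (u : k) ≠ 0 := fun u => u.ne_zero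
  have hunit : ∀ u : kˣ, omegaD k d₁ d₂ u * omegaD k d₁ d₂ u⁻¹ = 1 := by
    intro u
    rw [omegaD, omegaD, diagonal_mul_diagonal]
    refine (congrArg diagonal ?_).trans diagonal_one
    funext i
    fin_cases i <;>
      · simp only [Pi.mul_apply, Matrix.cons_val_zero, Matrix.cons_val_one, Matrix.head_cons,
          Matrix.cons_val_two, Matrix.tail_cons, Matrix.cons_val_three, Units.val_inv_eq_inv_val,
          _root_.inv_zpow, Pi.one_apply]
        exact mul_inv_cancel₀ (zpow_ne_zero _ (hne u))
  have hωinv : ∀ u : kˣ, (omegaD k d₁ d₂ u)⁻¹ = omegaD k d₁ d₂ u⁻¹ :=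
    fun u => Matrix.inv_eq_right_inv (hunit u)
  have hcancel : ∀ u : kˣ, omegaD k d₁ d₂ u⁻¹ * omegaD k d₁ d₂ u = 1 := by
    intro u
    have := hunit u⁻¹
    rwa [inv_inv] at this
  have hsc : ∀ (u : kˣ) (t : k),
      (φ ((u : k) ^ 2 * t)).1 * omegaD k d₁ d₂ u = omegaD k d₁ d₂ u * (φ t).1 := by
    intro u t
    have h := hconj t u
    rw [hωinv] at h
    rw [← h, mul_assoc, mul_assoc, hcancel, mul_one]
  have hev : ∀ (u : kˣ) (t : k) (i j : Fin 4),
      (φ ((u : k) ^ 2 * t)).1 i j * ![(u : k) ^ d₁, (u : k) ^ d₂, (u : k) ^ (-d₂), (u : k) ^ (-d₁)] j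
        = ![(u : k) ^ d₁, (u : k) ^ d₂, (u : k) ^ (-d₂), (u : k) ^ (-d₁)] i * (φ t).1 i j := by
    intro u t i j
    have h := congrFun (congrFun (hsc u t) i) j
    rwa [omegaD, Matrix.mul_diagonal, Matrix.diagonal_mul] at h
  have solve : ∀ (u : kˣ) (x y : k) (wi wj : ℤ), x * (u : k) ^ wj = (u : k) ^ wi * y →
      x = (u : k) ^ (wi - wj) * y := by
    intro u x y wi wj h
    rw [zpow_sub₀ (hne u), div_mul_eq_mul_div, eq_div_iff (zpow_ne_zero _ (hne u))]
    exact h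
  have hhA : ∀ (u : kˣ) (t : k), (φ ((u : k) ^ 2 * t)).1 0 1
      = (u : k) ^ (d₁ - d₂) * (φ t).1 0 1 :=
    fun u t => solve u _ _ d₁ d₂ (by simpa using hev u t 0 1)
  have hhD : ∀ (u : kˣ) (t : k), (φ ((u : k) ^ 2 * t)).1 1 2
      = (u : k) ^ (d₂ - -d₂) * (φ t).1 1 2 :=
    fun u t => solve u _ _ d₂ (-d₂) (by simpa using hev u t 1 2)
  have hhF : ∀ (u : kˣ) (t : k), (φ ((u : k) ^ 2 * t)).1 2 3
      = (u : k) ^ (-d₂ - -d₁) * (φ t).1 2 3 :=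
    fun u t => solve u _ _ (-d₂) (-d₁) (by simpa using hev u t 2 3)
  have hhB : ∀ (u : kˣ) (t : k), (φ ((u : k) ^ 2 * t)).1 0 2
      = (u : k) ^ (d₁ - -d₂) * (φ t).1 0 2 :=
    fun u t => solve u _ _ d₁ (-d₂) (by simpa using hev u t 0 2)
  have hhE : ∀ (u : kˣ) (t : k), (φ ((u : k) ^ 2 * t)).1 1 3
      = (u : k) ^ (d₂ - -d₁) * (φ t).1 1 3 :=
    fun u t => solve u _ _ d₂ (-d₁) (by simpa using hev u t 1 3)
  have hhC : ∀ (u : kˣ) (t : k), (φ ((u : k) ^ 2 * t)).1 0 3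
      = (u : k) ^ (d₁ - -d₁) * (φ t).1 0 3 :=
    fun u t => solve u _ _ d₁ (-d₁) (by simpa using hev u t 0 3)
  -- superdiagonal monomials
  obtain ⟨e₁, α, hα, hA, hnA⟩ := additive_homog (p := p) (fun t => (φ t).1 0 1)
    (hpoly 0 1) cA (d₁ - d₂) hhA hsup₁
  obtain ⟨e₂, δ, hδ, hD, hnD⟩ := additive_homog (p := p) (fun t => (φ t).1 1 2)
    (hpoly 1 2) cD (d₂ - -d₂) hhD hsup₂
  obtain ⟨e₃, γ, hγ, hF, hnF⟩ := additive_homog (p := p) (fun t => (φ t).1 2 3)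
    (hpoly 2 3) cF (-d₂ - -d₁) hhF hsup₃
  have hA' : ∀ t : k, (φ t).1 0 1 = α * t ^ p ^ e₁ := hA
  have hDv : ∀ t : k, (φ t).1 1 2 = δ * t ^ p ^ e₂ := hD
  have hFv : ∀ t : k, (φ t).1 2 3 = γ * t ^ p ^ e₃ := hF
  have hq32 : p ^ e₃ = p ^ e₁ := by
    have hcast : ((p : ℤ)) ^ e₃ = ((p : ℤ)) ^ e₁ := by omega
    exact_mod_cast hcast
  have hsymm : ∀ t : k, (φ t).1 0 1 * (φ (1:k)).1 1 2 = (φ (1:k)).1 0 1 * (φ t).1 1 2 := by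
    intro t
    have h1 := cB t 1
    have h2 := cB 1 t
    rw [add_comm (1:k) t] at h2
    linear_combination h2 - h1
  have hq21 : p ^ e₂ = p ^ e₁ := by
    have hXX : (X : k[X]) ^ p ^ e₂ = X ^ p ^ e₁ := by
      apply Polynomial.funext
      intro t
      have h := hsymm t
      rw [hA' t, hDv 1, hA' 1, hDv t, one_pow, one_pow] at h
      simp only [eval_pow, eval_X]
      apply mul_left_cancel₀ (mul_ne_zero hα hδ)
      linear_combination -h
    have := congrArg natDegree hXX
    simpa [natDegree_X_pow] using this
  have hD' : ∀ t : k, (φ t).1 1 2 = δ * t ^ p ^ e₁ := fun t => by rw [hDv t, hq21]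
  have hF' : ∀ t : k, (φ t).1 2 3 = γ * t ^ p ^ e₁ := fun t => by rw [hFv t, hq32]
  have hd2q : d₂ = ((p : ℤ)) ^ e₁ := by
    have hcast : ((p : ℤ)) ^ e₂ = ((p : ℤ)) ^ e₁ := by exact_mod_cast hq21
    omega
  have hd1q : d₁ = 3 * ((p : ℤ)) ^ e₁ := by omega
  -- p ≠ 2
  have hp2 : p ≠ 2 := by
    intro hp
    have h2 : (2 : k) = 0 := by
      have := CharP.cast_eq_zero k p
      rw [hp] at this
      exact_mod_cast this
    have h11 : (1 : k) + 1 = 0 := by linear_combination h2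
    have hcb := cB 1 1
    rw [h11, hφ0, hone02, hA' 1, hD' 1] at hcb
    refine mul_ne_zero hα hδ ?_
    linear_combination -hcb - ((φ (1:k)).1 0 2) * h2
  have htwo : (2 : k) ≠ 0 := by
    intro h
    have hdvd : p ∣ 2 := (CharP.cast_eq_zero_iff k p 2).mp (by exact_mod_cast h)
    have h1 := Nat.le_of_dvd (by norm_num) hdvd
    have h2 := hprime.two_le
    omega
  have hqfrob : ∀ (x y : k), (x + y) ^ p ^ e₁ = x ^ p ^ e₁ + y ^ p ^ e₁ :=
    fun x y => add_pow_char_pow x y p e₁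
  -- B step
  have hoddp : Odd p := hprime.odd_of_ne_two hp2
  have hBfull : ∀ t : k, (φ t).1 0 2 = α * δ / 2 * t ^ (2 * p ^ e₁) := by
    by_contra hBn
    have hgne : ¬∀ t : k, (φ t).1 0 2 - α * δ / 2 * t ^ (2 * p ^ e₁) = 0 := by
      intro h
      exact hBn fun t => sub_eq_zero.mp (h t)
    have hgadd : ∀ t t' : k, (φ (t + t')).1 0 2 - α * δ / 2 * (t + t') ^ (2 * p ^ e₁)
        = ((φ t).1 0 2 - α * δ / 2 * t ^ (2 * p ^ e₁))
          + ((φ t').1 0 2 - α * δ / 2 * t' ^ (2 * p ^ e₁)) := by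
      intro t t'
      rw [cB, hA' t, hD' t']
      have hexp : (t + t') ^ (2 * p ^ e₁) = (t ^ p ^ e₁ + t' ^ p ^ e₁) ^ 2 := by
        rw [mul_comm 2 (p ^ e₁), pow_mul, hqfrob]
      rw [hexp]
      field_simp
      ring
    have hgpoly : ∃ P : k[X], ∀ t : k,
        (φ t).1 0 2 - α * δ / 2 * t ^ (2 * p ^ e₁) = P.eval t := by
      obtain ⟨P, hP⟩ := hpoly 0 2
      exact ⟨P - C (α * δ / 2) * X ^ (2 * p ^ e₁), fun t => by simp [hP t]⟩
    have hgh : ∀ (u : kˣ) (t : k),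
        (φ ((u : k) ^ 2 * t)).1 0 2 - α * δ / 2 * ((u : k) ^ 2 * t) ^ (2 * p ^ e₁)
        = (u : k) ^ (d₁ - -d₂) * ((φ t).1 0 2 - α * δ / 2 * t ^ (2 * p ^ e₁)) := by
      intro u t
      rw [hhB]
      have hw : ((u : k)) ^ (d₁ - -d₂) = (u : k) ^ (4 * p ^ e₁) := by
        have he : d₁ - -d₂ = ((4 * p ^ e₁ : ℕ) : ℤ) := by push_cast; omega
        rw [he, zpow_natCast]
      rw [hw]
      field_simp
      ring
    obtain ⟨e', c', hc', hgm, hn'⟩ := additive_homog (p := p) _ hgpoly hgadd _ hgh hgne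
    have hnat : 2 * p ^ e' = 4 * p ^ e₁ := by
      have h1 : d₁ - -d₂ = ((4 * p ^ e₁ : ℕ) : ℤ) := by push_cast; omega
      have h2 := hn'.symm.trans h1
      exact_mod_cast h2
    have hodd : Odd (p ^ e') := hoddp.pow
    rw [Nat.odd_iff] at hodd
    omega
  -- E step
  have hEfull : ∀ t : k, (φ t).1 1 3 = δ * γ / 2 * t ^ (2 * p ^ e₁) := by
    by_contra hBn
    have hgne : ¬∀ t : k, (φ t).1 1 3 - δ * γ / 2 * t ^ (2 * p ^ e₁) = 0 := by
      intro h
      exact hBn fun t => sub_eq_zero.mp (h t)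
    have hgadd : ∀ t t' : k, (φ (t + t')).1 1 3 - δ * γ / 2 * (t + t') ^ (2 * p ^ e₁)
        = ((φ t).1 1 3 - δ * γ / 2 * t ^ (2 * p ^ e₁))
          + ((φ t').1 1 3 - δ * γ / 2 * t' ^ (2 * p ^ e₁)) := by
      intro t t'
      rw [cE, hD' t, hF' t']
      have hexp : (t + t') ^ (2 * p ^ e₁) = (t ^ p ^ e₁ + t' ^ p ^ e₁) ^ 2 := by
        rw [mul_comm 2 (p ^ e₁), pow_mul, hqfrob]
      rw [hexp]
      field_simp
      ring
    have hgpoly : ∃ P : k[X], ∀ t : k,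
        (φ t).1 1 3 - δ * γ / 2 * t ^ (2 * p ^ e₁) = P.eval t := by
      obtain ⟨P, hP⟩ := hpoly 1 3
      exact ⟨P - C (δ * γ / 2) * X ^ (2 * p ^ e₁), fun t => by simp [hP t]⟩
    have hgh : ∀ (u : kˣ) (t : k),
        (φ ((u : k) ^ 2 * t)).1 1 3 - δ * γ / 2 * ((u : k) ^ 2 * t) ^ (2 * p ^ e₁)
        = (u : k) ^ (d₂ - -d₁) * ((φ t).1 1 3 - δ * γ / 2 * t ^ (2 * p ^ e₁)) := by
      intro u t
      rw [hhE]
      have hw : ((u : k)) ^ (d₂ - -d₁) = (u : k) ^ (4 * p ^ e₁) := by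
        have he : d₂ - -d₁ = ((4 * p ^ e₁ : ℕ) : ℤ) := by push_cast; omega
        rw [he, zpow_natCast]
      rw [hw]
      field_simp
      ring
    obtain ⟨e', c', hc', hgm, hn'⟩ := additive_homog (p := p) _ hgpoly hgadd _ hgh hgne
    have hnat : 2 * p ^ e' = 4 * p ^ e₁ := by
      have h1 : d₂ - -d₁ = ((4 * p ^ e₁ : ℕ) : ℤ) := by push_cast; omega
      have h2 := hn'.symm.trans h1
      exact_mod_cast h2
    have hodd : Odd (p ^ e') := hoddp.pow
    rw [Nat.odd_iff] at hodd
    omega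
  -- p ≠ 3
  have hp3 : p ≠ 3 := by
    intro hp
    have h3 : (3 : k) = 0 := by
      have := CharP.cast_eq_zero k p
      rw [hp] at this
      exact_mod_cast this
    have hoddq : Odd (p ^ e₁) := hoddp.pow
    have hm1 : ((1 : k) + 1) ^ p ^ e₁ = -1 := by
      have h2 : (1 : k) + 1 = -1 := by linear_combination h3
      rw [h2, hoddq.neg_one_pow]
    have hm2 : ((1 : k) + 1) ^ (2 * p ^ e₁) = 1 := by
      rw [mul_comm, pow_mul, hm1]
      norm_num
    have hc1 := cC 1 1
    have hc2 := cC (1 + 1) 1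
    have h30 : (1 : k) + 1 + 1 = 0 := by linear_combination h3
    rw [h30, hφ0, hone03] at hc2
    rw [hA' 1, hEfull 1, hBfull 1, hF' 1] at hc1
    simp only [one_pow] at hc1
    rw [hA' (1+1), hEfull 1, hBfull (1+1), hF' 1] at hc2
    simp only [one_pow] at hc2
    rw [hm1, hm2] at hc2
    refine mul_ne_zero (mul_ne_zero hα hδ) hγ ?_
    have hhalf : (2:k)⁻¹ * 2 = 1 := inv_mul_cancel₀ htwo
    linear_combination -hc1 - hc2 - ((φ (1:k)).1 0 3) * h3 - (α*δ*γ) * hhalf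
  have hp5 : 5 ≤ p := by
    have h2 := hprime.two_le
    have h4 : p ≠ 4 := fun h => absurd hprime (by rw [h]; norm_num)
    omega
  have hthree : (3 : k) ≠ 0 := by
    intro h
    have hdvd : p ∣ 3 := (CharP.cast_eq_zero_iff k p 3).mp (by exact_mod_cast h)
    have h1 := Nat.le_of_dvd (by norm_num) hdvd
    omega
  have hsix : (6 : k) ≠ 0 := by
    intro h
    have : (2 : k) * 3 = 0 := by linear_combination h
    rcases mul_eq_zero.mp this with h' | h'
    · exact htwo h'
    · exact hthree h'
  -- C step
  have hCfull : ∀ t : k, (φ t).1 0 3 = α * δ * γ / 6 * t ^ (3 * p ^ e₁) := by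
    by_contra hBn
    have hgne : ¬∀ t : k, (φ t).1 0 3 - α * δ * γ / 6 * t ^ (3 * p ^ e₁) = 0 := by
      intro h
      exact hBn fun t => sub_eq_zero.mp (h t)
    have hgadd : ∀ t t' : k, (φ (t + t')).1 0 3 - α * δ * γ / 6 * (t + t') ^ (3 * p ^ e₁)
        = ((φ t).1 0 3 - α * δ * γ / 6 * t ^ (3 * p ^ e₁))
          + ((φ t').1 0 3 - α * δ * γ / 6 * t' ^ (3 * p ^ e₁)) := by
      intro t t'
      rw [cC, hA' t, hEfull t', hBfull t, hF' t']
      have hexp : (t + t') ^ (3 * p ^ e₁) = (t ^ p ^ e₁ + t' ^ p ^ e₁) ^ 3 := by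
        rw [mul_comm 3 (p ^ e₁), pow_mul, hqfrob]
      have hexp2 : ∀ s : k, s ^ (2 * p ^ e₁) = (s ^ p ^ e₁) ^ 2 := by
        intro s; rw [mul_comm 2 (p ^ e₁), pow_mul]
      have hexp3 : ∀ s : k, s ^ (3 * p ^ e₁) = (s ^ p ^ e₁) ^ 3 := by
        intro s; rw [mul_comm 3 (p ^ e₁), pow_mul]
      rw [hexp, hexp2 t, hexp2 t', hexp3 t, hexp3 t']
      field_simp
      ring
    have hgpoly : ∃ P : k[X], ∀ t : k,
        (φ t).1 0 3 - α * δ * γ / 6 * t ^ (3 * p ^ e₁) = P.eval t := by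
      obtain ⟨P, hP⟩ := hpoly 0 3
      exact ⟨P - C (α * δ * γ / 6) * X ^ (3 * p ^ e₁), fun t => by simp [hP t]⟩
    have hgh : ∀ (u : kˣ) (t : k),
        (φ ((u : k) ^ 2 * t)).1 0 3 - α * δ * γ / 6 * ((u : k) ^ 2 * t) ^ (3 * p ^ e₁)
        = (u : k) ^ (d₁ - -d₁) * ((φ t).1 0 3 - α * δ * γ / 6 * t ^ (3 * p ^ e₁)) := by
      intro u t
      rw [hhC]
      have hw : ((u : k)) ^ (d₁ - -d₁) = (u : k) ^ (6 * p ^ e₁) := by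
        have he : d₁ - -d₁ = ((6 * p ^ e₁ : ℕ) : ℤ) := by push_cast; omega
        rw [he, zpow_natCast]
      rw [hw]
      field_simp
      ring
    obtain ⟨e', c', hc', hgm, hn'⟩ := additive_homog (p := p) _ hgpoly hgadd _ hgh hgne
    have hnat : 2 * p ^ e' = 6 * p ^ e₁ := by
      have h1 : d₁ - -d₁ = ((6 * p ^ e₁ : ℕ) : ℤ) := by push_cast; omega
      have h2 := hn'.symm.trans h1
      exact_mod_cast h2
    have h1 : p ^ e' = 3 * p ^ e₁ := by omega
    rcases le_or_gt e' e₁ with h | h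
    · have h2 : p ^ e' ≤ p ^ e₁ := Nat.pow_le_pow_right (by omega) h
      have h3 : 0 < p ^ e₁ := Nat.pow_pos (by omega)
      omega
    · have h2 : p ^ e' = p ^ e₁ * p ^ (e' - e₁) := by
        rw [← pow_add]
        congr 1
        omega
      have h3 : 0 < p ^ e₁ := Nat.pow_pos (by omega)
      have h4 : p ^ (e' - e₁) = 3 := by
        have := h2.symm.trans h1
        exact Nat.eq_of_mul_eq_mul_left h3 (by omega)
      have h5 : p ≤ p ^ (e' - e₁) := Nat.le_self_pow (by omega) p
      omega
  -- final assembly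
  have hαδ : α * δ ≠ 0 := mul_ne_zero hα hδ
  have hαδγ : α * δ * γ ≠ 0 := mul_ne_zero hαδ hγ
  have hDD' : diagonal ![(1:k), α⁻¹, (α*δ)⁻¹, (α*δ*γ)⁻¹] * diagonal ![(1:k), α, α*δ, α*δ*γ]
      = 1 := by
    rw [diagonal_mul_diagonal]
    refine (congrArg diagonal ?_).trans diagonal_one
    funext i
    fin_cases i <;> simp <;> field_simp <;> ring
  have hD'D : diagonal ![(1:k), α, α*δ, α*δ*γ] * diagonal ![(1:k), α⁻¹, (α*δ)⁻¹, (α*δ*γ)⁻¹]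
      = 1 := by
    rw [diagonal_mul_diagonal]
    refine (congrArg diagonal ?_).trans diagonal_one
    funext i
    fin_cases i <;> simp <;> field_simp <;> ring
  refine ⟨hp5, e₁, ⟨diagonal ![(1:k), α⁻¹, (α*δ)⁻¹, (α*δ*γ)⁻¹],
      diagonal ![(1:k), α, α*δ, α*δ*γ], hDD', hD'D⟩, hd1q, hd2q, ?_, ?_⟩
  · intro u
    show diagonal _ * omegaD k d₁ d₂ u = omegaD k d₁ d₂ u * diagonal _
    rw [omegaD, diagonal_mul_diagonal, diagonal_mul_diagonal]
    exact congrArg diagonal (funext fun i => mul_comm _ _)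
  · intro t
    have hM : (φ t).1 = !![1, α*t^p^e₁, α*δ/2*t^(2*p^e₁), α*δ*γ/6*t^(3*p^e₁);
           0, 1, δ*t^p^e₁, δ*γ/2*t^(2*p^e₁);
           0, 0, 1, γ*t^p^e₁;
           0, 0, 0, 1] := by
      ext i j
      fin_cases i <;> fin_cases j <;>
        simp only [Matrix.cons_val', Matrix.cons_val_zero, Matrix.cons_val_one,
          Matrix.head_cons, Matrix.head_fin_const, Matrix.cons_val_fin_one, Matrix.empty_val',
          Matrix.of_apply, Matrix.vecHead, Matrix.vecTail, Fin.mk_zero, Fin.mk_one,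
          Matrix.cons_val_two, Matrix.cons_val_three, Matrix.tail_cons, Fin.isValue] <;>
        first
          | exact hdiag t _ | exact hA' t | exact hBfull t | exact hCfull t | exact hD' t
          | exact hEfull t | exact hF' t | exact z10 t | exact z20 t | exact z21 t
          | exact z30 t | exact z31 t | exact z32 t
    show diagonal ![(1:k), α, α*δ, α*δ*γ] * (φ t).1
        * diagonal ![(1:k), α⁻¹, (α*δ)⁻¹, (α*δ*γ)⁻¹] = _
    rw [hM]
    ext i j
    rw [Matrix.mul_diagonal, Matrix.diagonal_mul]
    fin_cases i <;> fin_cases j <;>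
      simp [Matrix.vecHead, Matrix.vecTail] <;> field_simp <;> ring
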